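/- Let A be a unital C*-algebra, D ∈ A self-adjoint, a ∈ A, and t ≥ 1. Let u_t := cfc(fun x => π/2 + arctan(x/t)) D be given by the continuous functional calculus. Then ‖u_t·a − a·u_t‖ ≤ t⁻¹·‖D·a − a·D‖. -/

import Mathlib

open Real MeasureTheory Set

open Real MeasureTheory Set

lemma integral_aux_pos {t x : ℝ} (ht : 0 < t) (hx : 0 < x) :
    ∫ s in Ioi t, x / (x ^ 2 + s ^ 2) = arctan (x / t) := by
  have hx' : x ≠ 0 := hx.ne'
  have hd : ∀ s ∈ Ici t, HasDerivAt (fun s : ℝ => arctan (s / x)) (x / (x ^ 2 + s ^ 2)) s := by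
    intro s _
    have h1 : HasDerivAt (fun s : ℝ => s / x) (1 / x) s := by
      simpa using (hasDerivAt_id s).div_const x
    have h2 := h1.arctan
    convert h2 using 1
    have : 1 + (s / x) ^ 2 ≠ 0 := by positivity
    field_simp
  have hpos : ∀ s ∈ Ioi t, 0 ≤ x / (x ^ 2 + s ^ 2) := fun s _ => by positivity
  have htend : Filter.Tendsto (fun s : ℝ => arctan (s / x)) Filter.atTop (nhds (π / 2)) := by
    have h1 : Filter.Tendsto (fun s : ℝ => s / x) Filter.atTop Filter.atTop :=
      Filter.tendsto_id.atTop_div_const hx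
    exact (tendsto_nhds_of_tendsto_nhdsWithin tendsto_arctan_atTop).comp h1
  have := integral_Ioi_of_hasDerivAt_of_tendsto' hd
    (integrableOn_Ioi_deriv_of_nonneg' hd hpos htend) htend
  rw [this]
  rw [show arctan (x / t) = arctan (t / x)⁻¹ by rw [inv_div]]
  rw [arctan_inv_of_pos (by positivity)]

lemma integral_aux {t : ℝ} (ht : 0 < t) (x : ℝ) :
    ∫ s in Ioi t, x / (x ^ 2 + s ^ 2) = arctan (x / t) := by
  rcases lt_trichotomy x 0 with hx | hx | hx
  · have h := integral_aux_pos ht (neg_pos.mpr hx)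
    have : ∀ s : ℝ, x / (x ^ 2 + s ^ 2) = -((-x) / ((-x) ^ 2 + s ^ 2)) := by
      intro s; rw [neg_pow]; ring_nf
    simp_rw [this]
    rw [integral_neg, h, neg_div, arctan_neg]; ring_nf
  · simp [hx]
  · exact integral_aux_pos ht hx

lemma key_commutator {A : Type*} [CStarAlgebra A] (D a : A) (hD : IsSelfAdjoint D) {s : ℝ} (hs : 0 < s) :
    ‖cfc (fun x : ℝ => x / (x ^ 2 + s ^ 2)) D * a -
      a * cfc (fun x : ℝ => x / (x ^ 2 + s ^ 2)) D‖
      ≤ (s ^ 2)⁻¹ * ‖D * a - a * D‖ := by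
  have hden : ∀ x : ℝ, x ^ 2 + s ^ 2 ≠ 0 := fun x => by positivity
  have hcont_inv : ContinuousOn (fun x : ℝ => (x ^ 2 + s ^ 2)⁻¹) (spectrum ℝ D) :=
    (((continuous_pow 2).add continuous_const).inv₀ hden).continuousOn
  have hcont_q : ContinuousOn (fun x : ℝ => x ^ 2 + s ^ 2) (spectrum ℝ D) :=
    ((continuous_pow 2).add continuous_const).continuousOn
  set R : A := cfc (fun x : ℝ => (x ^ 2 + s ^ 2)⁻¹) D with hR
  set T : A := cfc (fun x : ℝ => x ^ 2 + s ^ 2) D with hTdef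
  have hTR : T * R = 1 := by
    rw [hR, hTdef, ← cfc_mul _ _ D hcont_q hcont_inv]
    rw [show (fun x : ℝ => (x ^ 2 + s ^ 2) * (x ^ 2 + s ^ 2)⁻¹) = fun _ => 1 by
      ext x; exact mul_inv_cancel₀ (hden x)]
    exact cfc_const_one ℝ D
  have hRT : R * T = 1 := by
    rw [hR, hTdef, ← cfc_mul _ _ D hcont_inv hcont_q]
    rw [show (fun x : ℝ => (x ^ 2 + s ^ 2)⁻¹ * (x ^ 2 + s ^ 2)) = fun _ => 1 by
      ext x; exact inv_mul_cancel₀ (hden x)]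
    exact cfc_const_one ℝ D
  -- `T` in complex-scalar form
  set σ : ℂ := (s : ℂ) * (s : ℂ) with hσ
  have hT : T = D * D + σ • (1 : A) := by
    rw [hTdef, cfc_add_const (s ^ 2) (fun x : ℝ => x ^ 2) D (by fun_prop),
      cfc_pow_id (R := ℝ) D 2 hD, Algebra.algebraMap_eq_smul_one, sq]
    congr 1
    rw [← algebraMap_smul ℂ (s ^ 2) (1 : A)]
    congr 1
    simp [hσ, sq]
  have hDR : cfc (fun x : ℝ => x / (x ^ 2 + s ^ 2)) D = D * R := by
    have h := cfc_mul (fun x : ℝ => x) (fun x : ℝ => (x ^ 2 + s ^ 2)⁻¹) D (by fun_prop) hcont_inv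
    rw [cfc_id' ℝ D] at h
    rw [hR, ← h]
    exact cfc_congr fun x _ => div_eq_mul_inv _ _
  have hcomm : R * D = D * R := by
    have h1 := cfc_mul (fun x : ℝ => (x ^ 2 + s ^ 2)⁻¹) (fun x : ℝ => x) D hcont_inv (by fun_prop)
    have h2 := cfc_mul (fun x : ℝ => x) (fun x : ℝ => (x ^ 2 + s ^ 2)⁻¹) D (by fun_prop) hcont_inv
    rw [cfc_id' ℝ D] at h1 h2
    rw [hR, ← h1, ← h2]
    exact cfc_congr fun x _ => mul_comm _ _
  have hRsa : IsSelfAdjoint R := cfc_predicate _ D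
  set u : A := (s : ℂ) • (1 : A) with hu
  set z : A := Complex.I • D with hz
  set y : A := u + z with hy
  have hystar : star y = u - z := by
    simp [hy, hu, hz, star_smul, hD.star_eq, Complex.conj_I, Complex.conj_ofReal,
      sub_eq_add_neg, neg_smul]
  have huu : u * u = σ • (1 : A) := by
    simp only [hu, smul_mul_assoc, smul_smul, one_mul, hσ]
  have hzz : z * z = -(D * D) := by
    simp only [hz, smul_mul_assoc, mul_smul_comm, smul_smul, Complex.I_mul_I, neg_one_smul]
  have huz : u * z = z * u := by
    simp only [hu, hz, smul_mul_assoc, mul_smul_comm, smul_smul, one_mul, mul_one]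
    rw [mul_comm]
  have hyy : star y * y = T := by
    have e : (u - z) * (u + z) = u * u + u * z - z * u - z * z := by noncomm_ring
    rw [hystar, hy, e, huz, huu, hzz, hT]
    abel
  have hyy' : y * star y = T := by
    have e : (u + z) * (u - z) = u * u - u * z + z * u - z * z := by noncomm_ring
    rw [hystar, hy, e, huz, huu, hzz, hT]
    abel
  have hRy : R * y = y * R := by
    rw [hy, hu, hz]
    simp only [mul_add, add_mul, mul_smul_comm, smul_mul_assoc, mul_one, one_mul, hcomm]
  have hRystar : R * star y = star y * R := by
    rw [hystar, hu, hz]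
    simp only [mul_sub, sub_mul, mul_smul_comm, smul_mul_assoc, mul_one, one_mul, hcomm]
  set b : A := D * a - a * D with hb
  set S : A := σ • b - D * b * D with hS
  set X : A := D * R * a - a * (D * R) with hX
  -- identity (i)
  have h1 : X = R * S * R := by
    have hsb : S = D * a * T - T * (a * D) := by
      rw [hS, hT, hb]
      simp only [mul_add, add_mul, mul_sub, sub_mul, smul_sub, mul_smul_comm, smul_mul_assoc,
        mul_one, one_mul, mul_assoc]
      abel
    rw [hsb]
    have e1 : R * (D * a * T - T * (a * D)) * R
        = R * D * a * (T * R) - (R * T) * (a * (D * R)) := by noncomm_ring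
    rw [e1, hTR, hRT, mul_one, one_mul, hX, hcomm]
  -- identity (ii)
  have hub : u * b * u = σ • b := by
    simp only [hu, smul_mul_assoc, mul_smul_comm, smul_smul, one_mul, mul_one, hσ]
  have hzb : z * b * z = -(D * b * D) := by
    simp only [hz, smul_mul_assoc, mul_smul_comm, smul_smul, Complex.I_mul_I, neg_one_smul]
  have h2 : star y * b * star y + y * b * y = S + S := by
    have e : (u - z) * b * (u - z) + (u + z) * b * (u + z)
        = (u * b * u + z * b * z) + (u * b * u + z * b * z) := by noncomm_ring
    rw [hystar, hy, e, hub, hzb, hS, sub_eq_add_neg]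
  -- sandwich
  have sandwich : ∀ z' : A, R * z' = z' * R →
      (z' * R) * b * (z' * R) = R * (z' * b * z') * R := by
    intro z' hz'
    rw [show (z' * R) * b * (z' * R) = (z' * R) * b * z' * R by noncomm_ring, ← hz']
    noncomm_ring
  set v : A := y * R with hv
  set w : A := star y * R with hw
  have hkey : X + X = w * b * w + v * b * v := by
    rw [hv, hw, sandwich _ hRystar, sandwich _ hRy, h1,
      show R * (star y * b * star y) * R + R * (y * b * y) * R
        = R * (star y * b * star y + y * b * y) * R by noncomm_ring, h2]
    noncomm_ring
  -- norm bounds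
  have hRnorm : ‖R‖ ≤ (s ^ 2)⁻¹ := by
    rw [hR]
    refine norm_cfc_le (by positivity) fun x _ => ?_
    rw [Real.norm_eq_abs, abs_of_pos (by positivity)]
    exact inv_anti₀ (by positivity) (by nlinarith)
  have hRRy : R * R * y = y * (R * R) := by
    rw [mul_assoc, hRy, ← mul_assoc, hRy, mul_assoc]
  have hRRystar : R * R * star y = star y * (R * R) := by
    rw [mul_assoc, hRystar, ← mul_assoc, hRystar, mul_assoc]
  have hvstar : v * star v = R := by
    have hsv : star v = R * star y := by rw [hv, star_mul, hRsa.star_eq]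
    rw [hv, hsv, show y * R * (R * star y) = y * (R * R * star y) by noncomm_ring, hRRystar,
      show y * (star y * (R * R)) = (y * star y) * R * R by noncomm_ring, hyy', hTR, one_mul]
  have hwstar : w * star w = R := by
    have hsw : star w = R * y := by rw [hw, star_mul, hRsa.star_eq, star_star]
    rw [hw, hsw, show star y * R * (R * y) = star y * (R * R * y) by noncomm_ring, hRRy,
      show star y * (y * (R * R)) = (star y * y) * R * R by noncomm_ring, hyy, hTR, one_mul]
  have hvnorm : ‖v‖ ≤ s⁻¹ := by
    have h := CStarRing.norm_self_mul_star (x := v)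
    rw [hvstar] at h
    nlinarith [norm_nonneg v, inv_nonneg.mpr hs.le, hRnorm,
      (by rw [sq, mul_inv] : (s ^ 2)⁻¹ = s⁻¹ * s⁻¹)]
  have hwnorm : ‖w‖ ≤ s⁻¹ := by
    have h := CStarRing.norm_self_mul_star (x := w)
    rw [hwstar] at h
    nlinarith [norm_nonneg w, inv_nonneg.mpr hs.le, hRnorm,
      (by rw [sq, mul_inv] : (s ^ 2)⁻¹ = s⁻¹ * s⁻¹)]
  -- conclude
  have hXnorm : ‖X‖ + ‖X‖ ≤ 2 * ((s ^ 2)⁻¹ * ‖b‖) := by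
    have e : ‖X + X‖ = ‖X‖ + ‖X‖ := by
      rw [show X + X = (2 : ℝ) • X by rw [two_smul], norm_smul]
      simp; ring
    rw [← e, hkey]
    calc ‖w * b * w + v * b * v‖ ≤ ‖w * b * w‖ + ‖v * b * v‖ := norm_add_le _ _
      _ ≤ ‖w‖ * ‖b‖ * ‖w‖ + ‖v‖ * ‖b‖ * ‖v‖ := by
          gcongr <;> exact (norm_mul_le _ _).trans (by gcongr <;> exact norm_mul_le _ _)
      _ ≤ s⁻¹ * ‖b‖ * s⁻¹ + s⁻¹ * ‖b‖ * s⁻¹ := by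
          gcongr <;> first | exact hwnorm | exact hvnorm | positivity
      _ = 2 * ((s ^ 2)⁻¹ * ‖b‖) := by rw [sq, mul_inv]; ring
  rw [hDR]
  have : ‖D * R * a - a * (D * R)‖ = ‖X‖ := by rw [hX]
  rw [this, hb] at *
  linarith [hXnorm]

/-- Let `D` be a self-adjoint element of a unital C*-algebra `A`, `a ∈ A`
and `t ≥ 1`.  With `u_t := (π/2 + arctan(·/t))(D)` given by the continuous functional
calculus, one has `‖[u_t, a]‖ ≤ t⁻¹ ‖[D, a]‖`. -/
theorem commutator_ut {A : Type*} [CStarAlgebra A] (D a : A) (hD : IsSelfAdjoint D)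
    (t : ℝ) (ht : 1 ≤ t) :
    ‖cfc (fun x : ℝ => π / 2 + Real.arctan (x / t)) D * a -
      a * cfc (fun x : ℝ => π / 2 + Real.arctan (x / t)) D‖ ≤
      t⁻¹ * ‖D * a - a * D‖ := by
  have ht0 : (0 : ℝ) < t := lt_of_lt_of_le one_pos ht
  rcases subsingleton_or_nontrivial A with hA | hA
  · rw [Subsingleton.elim (cfc (fun x : ℝ => π / 2 + Real.arctan (x / t)) D * a -
      a * cfc (fun x : ℝ => π / 2 + Real.arctan (x / t)) D) (0 : A),
      Subsingleton.elim (D * a - a * D) (0 : A)]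
    simp
  set b : A := D * a - a * D with hb
  -- split off the constant
  have hsplit : cfc (fun x : ℝ => π / 2 + Real.arctan (x / t)) D
      = algebraMap ℝ A (π / 2) + cfc (fun x : ℝ => Real.arctan (x / t)) D := by
    exact cfc_const_add (π / 2) (fun x : ℝ => Real.arctan (x / t)) D
      ((Real.continuous_arctan.comp (continuous_id.div_const t)).continuousOn)
  set E : A := cfc (fun x : ℝ => Real.arctan (x / t)) D with hE
  have hred : cfc (fun x : ℝ => π / 2 + Real.arctan (x / t)) D * a -
      a * cfc (fun x : ℝ => π / 2 + Real.arctan (x / t)) D = E * a - a * E := by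
    rw [hsplit]
    have e : (algebraMap ℝ A (π / 2) + E) * a - a * (algebraMap ℝ A (π / 2) + E)
        = (E * a - a * E) + (algebraMap ℝ A (π / 2) * a - a * algebraMap ℝ A (π / 2)) := by
      noncomm_ring
    rw [e, Algebra.commutes]
    simp
  rw [hred]
  -- the integrand family
  set φ : ℝ → ℝ → ℝ := fun s x => x / (x ^ 2 + max s t ^ 2) with hφ
  have hqpos : ∀ s : ℝ, (0 : ℝ) < max s t := fun s => lt_of_lt_of_le ht0 (le_max_right s t)
  have hden : ∀ s x : ℝ, x ^ 2 + max s t ^ 2 ≠ 0 := fun s x => by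
    have := hqpos s; positivity
  have hf : Continuous (Function.uncurry fun s => (spectrum ℝ D).restrict (φ s)) := by
    apply Continuous.div
    · exact continuous_subtype_val.comp continuous_snd
    · fun_prop
    · exact fun p => hden p.1 p.2
  have hφcont : ∀ s : ℝ, ContinuousOn (φ s) (spectrum ℝ D) := fun s =>
    (continuous_id.div (by fun_prop) (hden s)).continuousOn
  set bound : ℝ → ℝ := fun s => ‖D‖ * (max s t ^ 2)⁻¹ with hbound_def
  have hbound : ∀ s : ℝ, ∀ x ∈ spectrum ℝ D, ‖φ s x‖ ≤ ‖bound s‖ := by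
    intro s x hx
    have hxD : ‖x‖ ≤ ‖D‖ := spectrum.norm_le_norm_of_mem hx
    have hpos : (0:ℝ) < x ^ 2 + max s t ^ 2 := by have := hqpos s; positivity
    have h1 : ‖φ s x‖ = |x| / (x ^ 2 + max s t ^ 2) := by
      rw [hφ]; rw [Real.norm_eq_abs, abs_div, abs_of_pos hpos]
    rw [h1, hbound_def, Real.norm_eq_abs]
    have : |x| / (x ^ 2 + max s t ^ 2) ≤ ‖D‖ * (max s t ^ 2)⁻¹ := by
      rw [div_eq_mul_inv]
      apply mul_le_mul (by rwa [Real.norm_eq_abs] at hxD)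
      · exact inv_anti₀ (by have := hqpos s; positivity) (by nlinarith)
      · positivity
      · exact norm_nonneg D
    refine this.trans (le_abs_self _)
  -- integrability of the bound
  have hint_inv : IntegrableOn (fun s : ℝ => (s ^ 2)⁻¹) (Ioi t) := by
    have h := integrableOn_Ioi_rpow_of_lt (a := (-2 : ℝ)) (by norm_num) ht0
    refine h.congr_fun (fun x hx => ?_) measurableSet_Ioi
    have hx0 : (0 : ℝ) < x := ht0.trans hx
    beta_reduce
    rw [show (-2 : ℝ) = -(2 : ℕ) by norm_num, rpow_neg hx0.le, rpow_natCast]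
  have hint_bound : IntegrableOn bound (Ioi t) := by
    refine IntegrableOn.congr_fun (hint_inv.const_mul ‖D‖) (fun x hx => ?_) measurableSet_Ioi
    rw [hbound_def]
    simp only
    rw [max_eq_left (le_of_lt hx)]
  -- cfc commutes with the integral
  have hrep : cfc (fun r : ℝ => ∫ s in Ioi t, φ s r) D = ∫ s in Ioi t, cfc (φ s) D :=
    cfc_integral φ bound D
      (Continuous.continuousOn (continuous_snd.div (by fun_prop) fun p => hden p.1 p.2 :
        Continuous fun p : ℝ × ℝ => p.2 / (p.2 ^ 2 + max p.1 t ^ 2)))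
      (Filter.Eventually.of_forall fun s x hx => (hbound s x hx).trans (le_of_eq
        (Real.norm_of_nonneg (by have := hqpos s; rw [hbound_def]; positivity))))
      hint_bound.hasFiniteIntegral hD
  have harct : E = ∫ s in Ioi t, cfc (φ s) D := by
    rw [hE, ← hrep]
    apply cfc_congr
    intro r _
    show arctan (r / t) = ∫ s in Ioi t, φ s r
    rw [← integral_aux ht0 r]
    refine setIntegral_congr_fun measurableSet_Ioi fun s hs => ?_
    rw [hφ]
    simp only
    rw [max_eq_left (le_of_lt hs)]
  -- integrability of the operator-valued integrand
  set fc : ℝ → C(spectrum ℝ D, ℝ) := fun s => ⟨_, (hφcont s).restrict⟩ with hfc_def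
  have hfc : Continuous fc := (ContinuousMap.curry ⟨_, hf⟩).continuous
  have hFeq : ∀ s, cfc (φ s) D = cfcL (R := ℝ) hD (fc s) := fun s => cfc_eq_cfcL hD (hφcont s)
  have hFcont : Continuous fun s => cfc (φ s) D := by
    simp only [hFeq]
    exact (cfcL (R := ℝ) hD).continuous.comp hfc
  have hFint : IntegrableOn (fun s => cfc (φ s) D) (Ioi t) := by
    refine Integrable.mono' hint_bound hFcont.aestronglyMeasurable ?_
    refine Filter.Eventually.of_forall fun s => ?_
    refine norm_cfc_le (by have := hqpos s; rw [hbound_def]; positivity) fun x hx => ?_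
    exact (hbound s x hx).trans_eq (Real.norm_of_nonneg (by
      have := hqpos s; rw [hbound_def]; positivity))
  -- pull the commutator inside the integral
  set L : A →L[ℝ] A := (ContinuousLinearMap.mul ℝ A).flip a - ContinuousLinearMap.mul ℝ A a
    with hLdef
  have hL : ∀ x : A, L x = x * a - a * x := fun x => by
    simp [hLdef, ContinuousLinearMap.sub_apply]
  have hcommE : E * a - a * E = ∫ s in Ioi t, (cfc (φ s) D * a - a * cfc (φ s) D) := by
    calc E * a - a * E = L E := (hL E).symm
      _ = ∫ s in Ioi t, L (cfc (φ s) D) := by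
          rw [harct, ContinuousLinearMap.integral_comp_comm L hFint]
      _ = ∫ s in Ioi t, (cfc (φ s) D * a - a * cfc (φ s) D) := by
          exact integral_congr_ae (Filter.Eventually.of_forall fun s => hL _)
  rw [hcommE]
  -- final estimate
  have hg_int : IntegrableOn (fun s : ℝ => (s ^ 2)⁻¹ * ‖b‖) (Ioi t) := hint_inv.mul_const _
  have hbnd : ∀ᵐ s ∂(volume.restrict (Ioi t)),
      ‖cfc (φ s) D * a - a * cfc (φ s) D‖ ≤ (s ^ 2)⁻¹ * ‖b‖ := by
    refine (ae_restrict_iff' measurableSet_Ioi).mpr (Filter.Eventually.of_forall fun s hs => ?_)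
    have hs0 : (0 : ℝ) < s := ht0.trans hs
    have : φ s = fun x : ℝ => x / (x ^ 2 + s ^ 2) := by
      funext x; rw [hφ]; simp only; rw [max_eq_left (le_of_lt hs)]
    rw [this, hb]
    exact key_commutator D a hD hs0
  have hfinal := norm_integral_le_of_norm_le hg_int hbnd
  refine hfinal.trans ?_
  rw [integral_mul_const]
  have : ∫ s in Ioi t, (s ^ 2)⁻¹ = t⁻¹ := by
    have h := integral_Ioi_rpow_of_lt (a := (-2 : ℝ)) (by norm_num) ht0
    rw [setIntegral_congr_fun measurableSet_Ioi
      (fun x hx => by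
        have hx0 : (0 : ℝ) < x := ht0.trans hx
        rw [show ((x:ℝ) ^ 2)⁻¹ = x ^ (-2 : ℝ) by
          rw [show (-2 : ℝ) = -(2 : ℕ) by norm_num, rpow_neg hx0.le, rpow_natCast]]), h]
    norm_num
    rw [rpow_neg_one]
  rw [this]
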